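/- arXiv:2305.09841 — 2 statements merged into one kernel-verified Lean document; each statement's English description precedes it below -/
import Mathlib

section
/- Let v ∈ ℝ³ with |v| ≥ 2R and let e be a unit vector parallel to v. Then the set {w ∈ B_R(v) : 1 − ((w·e)/|w|)² < ε} has Lebesgue measure at most C R ε |v|² for an absolute constant C; consequently, for ε ≈ μ/(2R|v|²) this set has measure less than μ/2. -/
open MeasureTheory Real

local notation "V" => EuclideanSpace ℝ (Fin 3)

set_option maxHeartbeats 1000000 in
theorem stmt_5 :
    ∃ C : ℝ, 0 < C ∧
      ∀ (R : ℝ), 0 < R → ∀ (v e : V), ‖e‖ = 1 → (∃ t : ℝ, v = t • e) →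
        2 * R ≤ ‖v‖ →
        (∀ ε : ℝ, 0 < ε →
          volume {w : V | w ∈ Metric.ball v R ∧ 1 - ((inner ℝ w e : ℝ) / ‖w‖) ^ 2 < ε} ≤
            ENNReal.ofReal (C * R * ε * ‖v‖ ^ 2)) ∧
        (∀ μ : ℝ, 0 < μ →
          volume {w : V | w ∈ Metric.ball v R ∧
              1 - ((inner ℝ w e : ℝ) / ‖w‖) ^ 2 < μ / (4 * C * R * ‖v‖ ^ 2)} <
            ENNReal.ofReal (μ / 2)) := by
  refine ⟨18, by norm_num, fun R hR v e he hve hRv => ?_⟩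
  obtain ⟨t, htv⟩ := hve
  have hvpos : (0:ℝ) < ‖v‖ := lt_of_lt_of_le (by linarith) hRv
  -- orthonormal basis with first vector e
  have hcard : Module.finrank ℝ V = Fintype.card (Fin 3) := by
    simp [finrank_euclideanSpace_fin]
  have horth : Orthonormal ℝ (({0} : Set (Fin 3)).restrict (fun _ => e)) := by
    refine ⟨fun i => he, fun {i j} hij => absurd ?_ hij⟩
    ext
    rw [Set.mem_singleton_iff.mp i.2, Set.mem_singleton_iff.mp j.2]
  obtain ⟨b, hb⟩ := horth.exists_orthonormalBasis_extension_of_card_eq hcard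
  have hb0 : b 0 = e := hb 0 rfl
  have main : ∀ ε : ℝ, 0 < ε →
      volume {w : V | w ∈ Metric.ball v R ∧ 1 - ((inner ℝ w e : ℝ) / ‖w‖) ^ 2 < ε} ≤
        ENNReal.ofReal (18 * R * ε * ‖v‖ ^ 2) := by
    intro ε hε
    set r : ℝ := Real.sqrt ε * (3 / 2 * ‖v‖) with hrdef
    have hrnn : 0 ≤ r := by positivity
    have hr2 : r ^ 2 = ε * (3 / 2 * ‖v‖) ^ 2 := by
      rw [hrdef, mul_pow, Real.sq_sqrt hε.le]
    set I : Fin 3 → Set ℝ := ![Set.Icc (t - R) (t + R), Set.Icc (-r) r, Set.Icc (-r) r]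
      with hI
    have hImeas : MeasurableSet (Set.univ.pi I) := by
      refine MeasurableSet.univ_pi fun i => ?_
      fin_cases i <;> exact measurableSet_Icc
    have hsub : {w : V | w ∈ Metric.ball v R ∧ 1 - ((inner ℝ w e : ℝ) / ‖w‖) ^ 2 < ε} ⊆
        b.repr ⁻¹' ((MeasurableEquiv.toLp 2 (Fin 3 → ℝ)).symm ⁻¹' (Set.univ.pi I)) := by
      rintro w ⟨hwb, hwc⟩
      have hdist : ‖w - v‖ < R := by
        rw [← dist_eq_norm]; exact Metric.mem_ball.mp hwb
      have hwlow : R < ‖w‖ := by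
        have h1 : ‖v‖ - ‖w‖ ≤ ‖v - w‖ := norm_sub_norm_le v w
        have h2 : ‖v - w‖ = ‖w - v‖ := norm_sub_rev v w
        linarith
      have hwpos : (0:ℝ) < ‖w‖ := lt_trans hR hwlow
      have hwup : ‖w‖ ≤ 3 / 2 * ‖v‖ := by
        have h1 : ‖w‖ - ‖v‖ ≤ ‖w - v‖ := norm_sub_norm_le w v
        linarith
      -- Parseval
      have hsum : (b.repr w 0) ^ 2 + (b.repr w 1) ^ 2 + (b.repr w 2) ^ 2 = ‖w‖ ^ 2 := by
        have h1 : ‖b.repr w‖ = ‖w‖ := b.repr.norm_map w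
        have h2 : ‖b.repr w‖ ^ 2 = ∑ i, ‖b.repr w i‖ ^ 2 := by
          rw [EuclideanSpace.norm_eq, Real.sq_sqrt (by positivity)]
        rw [← h1, h2, Fin.sum_univ_three]
        simp [Real.norm_eq_abs, sq_abs]
      have hcone : ‖w‖ ^ 2 - (inner ℝ w e : ℝ) ^ 2 < ε * ‖w‖ ^ 2 := by
        have hn : (0:ℝ) < ‖w‖ ^ 2 := by positivity
        rw [div_pow] at hwc
        nlinarith [mul_lt_mul_of_pos_right hwc hn,
          div_mul_cancel₀ ((inner ℝ w e : ℝ) ^ 2) (ne_of_gt hn)]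
      have hx0 : b.repr w 0 = (inner ℝ e w : ℝ) := by
        rw [b.repr_apply_apply, hb0]
      have hcomm : (inner ℝ e w : ℝ) = (inner ℝ w e : ℝ) := real_inner_comm w e
      have hsq : (b.repr w 1) ^ 2 ≤ r ^ 2 ∧ (b.repr w 2) ^ 2 ≤ r ^ 2 := by
        rw [hx0, hcomm] at hsum
        have hb2 : (b.repr w 1) ^ 2 + (b.repr w 2) ^ 2 < ε * ‖w‖ ^ 2 := by
          linarith
        have hw2 : ‖w‖ ^ 2 ≤ (3 / 2 * ‖v‖) ^ 2 := by nlinarith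
        have h3 : ε * ‖w‖ ^ 2 ≤ ε * (3 / 2 * ‖v‖) ^ 2 :=
          mul_le_mul_of_nonneg_left hw2 hε.le
        constructor
        · nlinarith [sq_nonneg (b.repr w 2)]
        · nlinarith [sq_nonneg (b.repr w 1)]
      have habs : ∀ x : ℝ, x ^ 2 ≤ r ^ 2 → x ∈ Set.Icc (-r) r := by
        intro x hx
        constructor <;> nlinarith
      have hx0mem : b.repr w 0 ∈ Set.Icc (t - R) (t + R) := by
        have hev : (inner ℝ e v : ℝ) = t := by
          rw [htv, real_inner_smul_right, real_inner_self_eq_norm_sq, he]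
          ring
        have hiner : (inner ℝ e (w - v) : ℝ) = b.repr w 0 - t := by
          rw [inner_sub_right, hx0, hev]
        have habs2 : |(inner ℝ e (w - v) : ℝ)| ≤ ‖w - v‖ := by
          calc |(inner ℝ e (w - v) : ℝ)| ≤ ‖e‖ * ‖w - v‖ := abs_real_inner_le_norm e (w - v)
            _ = ‖w - v‖ := by rw [he, one_mul]
        rw [hiner] at habs2
        have := abs_le.mp habs2
        constructor <;> linarith [this.1, this.2]
      intro i _
      fin_cases i
      · simpa [MeasurableEquiv.coe_toLp, hI] using hx0mem
      · simpa [MeasurableEquiv.coe_toLp, hI] using habs _ hsq.1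
      · simpa [MeasurableEquiv.coe_toLp, hI] using habs _ hsq.2
    calc volume {w : V | w ∈ Metric.ball v R ∧ 1 - ((inner ℝ w e : ℝ) / ‖w‖) ^ 2 < ε}
        ≤ volume (b.repr ⁻¹' ((MeasurableEquiv.toLp 2 (Fin 3 → ℝ)).symm ⁻¹'
            (Set.univ.pi I))) := measure_mono hsub
      _ = volume ((MeasurableEquiv.toLp 2 (Fin 3 → ℝ)).symm ⁻¹' (Set.univ.pi I)) :=
          b.measurePreserving_repr.measure_preimage
            (((MeasurableEquiv.toLp 2 (Fin 3 → ℝ)).symm.measurable hImeas).nullMeasurableSet)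
      _ = volume (Set.univ.pi I) :=
          (EuclideanSpace.volume_preserving_symm_measurableEquiv_toLp
            (Fin 3)).measure_preimage hImeas.nullMeasurableSet
      _ = ∏ i, volume (I i) := volume_pi_pi I
      _ ≤ ENNReal.ofReal (18 * R * ε * ‖v‖ ^ 2) := by
          rw [Fin.prod_univ_three]
          simp only [hI, Matrix.cons_val_zero, Matrix.cons_val_one, Matrix.head_cons,
            Matrix.cons_val_two, Matrix.tail_cons, Real.volume_Icc]
          rw [← ENNReal.ofReal_mul (by linarith), ← ENNReal.ofReal_mul (by nlinarith)]
          apply ENNReal.ofReal_le_ofReal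
          nlinarith [hr2, hvpos, sq_nonneg ‖v‖]
  refine ⟨main, fun μ hμ => ?_⟩
  have hε : 0 < μ / (4 * 18 * R * ‖v‖ ^ 2) := by positivity
  calc volume {w : V | w ∈ Metric.ball v R ∧
          1 - ((inner ℝ w e : ℝ) / ‖w‖) ^ 2 < μ / (4 * 18 * R * ‖v‖ ^ 2)}
      ≤ ENNReal.ofReal (18 * R * (μ / (4 * 18 * R * ‖v‖ ^ 2)) * ‖v‖ ^ 2) := main _ hε
    _ = ENNReal.ofReal (μ / 4) := by
        congr 1
        field_simp
    _ < ENNReal.ofReal (μ / 2) := by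
        rw [ENNReal.ofReal_lt_ofReal_iff (by linarith)]
        linarith
end

section
/- Anisotropic upper bound: let f be the standard Gaussian on ℝ³, a(z) = |z|^{-1}(I − z⊗z/|z|²), and w = Ne₁ with N ≥ 2. Then diag(N,1,1) [∫_{B_{N/2}} a(w−v) f(v) dv] diag(N,1,1) ≤ (C/N) I as symmetric matrices, for an absolute constant C. -/
open MeasureTheory Real

local notation "V" => EuclideanSpace ℝ (Fin 3)

set_option maxHeartbeats 1000000

/-- The Coulomb Landau kernel `a_{ij}(z) = |z|⁻¹ (δ_{ij} − z_i z_j / |z|²)`. -/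
noncomputable def landauKernel (z : EuclideanSpace ℝ (Fin 3)) (i j : Fin 3) : ℝ :=
  ‖z‖⁻¹ * ((if i = j then 1 else 0) - z i * z j / ‖z‖ ^ 2)

/-- The standard Gaussian density on `ℝ³`. -/
noncomputable def stdGaussian (v : EuclideanSpace ℝ (Fin 3)) : ℝ :=
  (2 * π) ^ (-(3 : ℝ) / 2) * Real.exp (-‖v‖ ^ 2 / 2)

lemma gauss_integrable : Integrable (fun v : V => rexp (-‖v‖^2/4)) := by
  have h1 := (GaussianFourier.integrable_cexp_neg_mul_sq_norm_add
    (b := ((4:ℝ)⁻¹ : ℂ)) (by norm_num) 0 (0 : V)).norm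
  convert h1 using 2 with v
  simp [Complex.norm_exp]
  norm_cast
  ring


lemma gauss_value : ∫ v : V, rexp (-‖v‖^2/4) = (4*π)^((3:ℝ)/2) := by
  have h : ∫ v : V, rexp (-(4:ℝ)⁻¹ * ‖v‖ ^ 2)
      = (π / (4:ℝ)⁻¹) ^ ((Module.finrank ℝ (EuclideanSpace ℝ (Fin 3)) : ℝ) / 2) :=
    GaussianFourier.integral_rexp_neg_mul_sq_norm (by norm_num)
  simp only [finrank_euclideanSpace, Fintype.card_fin] at h
  rw [show (fun v : V => rexp (-‖v‖^2/4)) = fun v : V => rexp (-(4:ℝ)⁻¹ * ‖v‖^2) from by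
    funext v; ring_nf]
  rw [h, show π / (4:ℝ)⁻¹ = 4*π by field_simp]
  norm_num


lemma gauss_K : (2*π)^(-(3:ℝ)/2) * (4*π)^((3:ℝ)/2) ≤ 3 := by
  have hpi := Real.pi_pos
  have h1 : (2*π)^(-(3:ℝ)/2) = ((2*π)^((3:ℝ)/2))⁻¹ := by
    rw [neg_div, Real.rpow_neg (by positivity)]
  rw [h1, inv_mul_le_iff₀ (by positivity)]
  have h2 : (4*π)^((3:ℝ)/2) = (2:ℝ)^((3:ℝ)/2) * (2*π)^((3:ℝ)/2) := by
    rw [← Real.mul_rpow (by norm_num) (by positivity)]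
    ring_nf
  rw [h2]
  have h3 : (2:ℝ)^((3:ℝ)/2) ≤ 3 := by
    have e1 : (2:ℝ)^((3:ℝ)/2) = ((2:ℝ)^(3:ℝ))^((1:ℝ)/2) := by
      rw [← Real.rpow_mul (by norm_num)]; norm_num
    have e2 : ((2:ℝ)^(3:ℝ)) = 8 := by
      rw [show (3:ℝ) = ((3:ℕ):ℝ) by norm_num, Real.rpow_natCast]; norm_num
    rw [e1, e2, ← Real.sqrt_eq_rpow]
    rw [show (3:ℝ) = Real.sqrt 9 by
      rw [show (9:ℝ) = 3^2 by norm_num, Real.sqrt_sq (by norm_num)]]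
    exact Real.sqrt_le_sqrt (by norm_num)
  nlinarith [Real.rpow_nonneg (show (0:ℝ) ≤ 2*π by positivity) ((3:ℝ)/2)]

lemma exp_aux {x : ℝ} (hx : 0 ≤ x) : (1 + x) * rexp (-x/2) ≤ 3 * rexp (-x/4) := by
  have h8 := Real.add_one_le_exp (x/8)
  have e2 : rexp (x/8) ^ 2 = rexp (x/4) := by
    rw [sq, ← Real.exp_add]; ring_nf
  have key : 1 + x ≤ 3 * rexp (x/4) := by
    nlinarith [Real.exp_pos (x/8), sq_nonneg (3*x - 8), sq_nonneg (rexp (x/8) - (1 + x/8))]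
  have hpos : 0 < rexp (-x/2) := Real.exp_pos _
  calc (1 + x) * rexp (-x/2) ≤ (3 * rexp (x/4)) * rexp (-x/2) := by nlinarith
    _ = 3 * rexp (-x/4) := by rw [mul_assoc, ← Real.exp_add]; ring_nf

lemma pointwise_bound (N : ℕ) (hN : 2 ≤ N) (i j : Fin 3) (v : V) (hv : ‖v‖ < (N:ℝ)/2) :
    (if i = 0 then (N:ℝ) else 1) * (if j = 0 then (N:ℝ) else 1) *
      |landauKernel ((N:ℝ) • EuclideanSpace.single (0:Fin 3) (1:ℝ) - v) i j|
      ≤ 8 / N * (1 + ‖v‖^2) := by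
  have hNr : (2:ℝ) ≤ (N:ℝ) := by exact_mod_cast hN
  have hNpos : (0:ℝ) < N := by linarith
  set z : V := (N:ℝ) • EuclideanSpace.single (0:Fin 3) (1:ℝ) - v with hzdef
  have hz : ∀ k, z k = (if k = 0 then (N:ℝ) else 0) - v k := by
    intro k
    by_cases h : k = 0 <;> simp [hzdef, EuclideanSpace.single_apply, h]
  set r : ℝ := ‖z‖ with hrdef
  have hr : (N:ℝ)/2 ≤ r := by
    have h1 : ‖(N:ℝ) • EuclideanSpace.single (0:Fin 3) (1:ℝ)‖ - ‖v‖ ≤ r := norm_sub_norm_le _ _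
    have h2 : ‖(N:ℝ) • EuclideanSpace.single (0:Fin 3) (1:ℝ)‖ = (N:ℝ) := by
      rw [norm_smul, EuclideanSpace.norm_single]
      simp [abs_of_pos hNpos]
    rw [h2] at h1; linarith
  have hrpos : 0 < r := by linarith
  have hr2 : r ^ 2 = z 0 ^ 2 + z 1 ^ 2 + z 2 ^ 2 := by
    have h3 : r = Real.sqrt (∑ k, z k ^ 2) := by
      simp [hrdef, EuclideanSpace.norm_eq, Real.norm_eq_abs, sq_abs]
    rw [h3, Real.sq_sqrt (by positivity), Fin.sum_univ_three]
  have hv2 : ‖v‖ ^ 2 = v 0 ^ 2 + v 1 ^ 2 + v 2 ^ 2 := by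
    have h3 : ‖v‖ = Real.sqrt (∑ k, v k ^ 2) := by
      simp [EuclideanSpace.norm_eq, Real.norm_eq_abs, sq_abs]
    rw [h3, Real.sq_sqrt (by positivity), Fin.sum_univ_three]
  have habs : ∀ k, |z k| ≤ r := by
    intro k
    have h1 : z k ^ 2 ≤ r ^ 2 := by
      fin_cases k <;> simp <;> nlinarith [sq_nonneg (z 0), sq_nonneg (z 1), sq_nonneg (z 2)]
    calc |z k| = Real.sqrt (z k ^ 2) := (Real.sqrt_sq_eq_abs _).symm
      _ ≤ Real.sqrt (r ^ 2) := Real.sqrt_le_sqrt h1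
      _ = r := by rw [Real.sqrt_sq hrpos.le]
  have hvcoord : ∀ k : Fin 3, v k ^ 2 ≤ ‖v‖ ^ 2 := by
    intro k
    rw [hv2]
    fin_cases k <;> simp <;>
      nlinarith [sq_nonneg (v 0), sq_nonneg (v 1), sq_nonneg (v 2)]
  have hvnn : (0:ℝ) ≤ ‖v‖ := norm_nonneg _
  have hzr : ‖z‖ = r := hrdef.symm
  clear_value z r
  clear hzdef hrdef
  have hrne : r ≠ 0 := ne_of_gt hrpos
  have hNhalf : (0:ℝ) < (N:ℝ)/2 := by positivity
  have hcube : ((N:ℝ)/2) ^ 3 ≤ r ^ 3 := pow_le_pow_left₀ hNhalf.le hr 3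
  have hsq : ((N:ℝ)/2) ^ 2 ≤ r ^ 2 := pow_le_pow_left₀ hNhalf.le hr 2
  by_cases hi : i = 0 <;> by_cases hj : j = 0
  · -- i = j = 0
    subst hi; subst hj
    have e1 : landauKernel z 0 0 = (z 1 ^ 2 + z 2 ^ 2) / r ^ 3 := by
      unfold landauKernel
      rw [if_pos rfl, hzr]
      rw [eq_div_iff (by positivity : (r:ℝ) ^ 3 ≠ 0)]
      have key : z 0 * z 0 = r ^ 2 - (z 1 ^ 2 + z 2 ^ 2) := by
        rw [← sq]; linarith [hr2]
      rw [key]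
      field_simp
      ring
    rw [e1, if_pos rfl]
    rw [abs_of_nonneg (by positivity)]
    have hz1 : z 1 = -v 1 := by rw [hz, if_neg (by decide)]; ring
    have hz2 : z 2 = -v 2 := by rw [hz, if_neg (by decide)]; ring
    have hb : z 1 ^ 2 + z 2 ^ 2 ≤ ‖v‖ ^ 2 := by
      rw [hz1, hz2, hv2]; nlinarith [sq_nonneg (v 0)]
    calc (N:ℝ) * N * ((z 1 ^ 2 + z 2 ^ 2) / r ^ 3)
        ≤ (N:ℝ) * N * (‖v‖ ^ 2 / ((N:ℝ)/2) ^ 3) := by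
          gcongr <;> first | positivity | exact hb | exact hcube
        _ = 8 / N * ‖v‖ ^ 2 := by field_simp; ring
        _ ≤ 8 / N * (1 + ‖v‖ ^ 2) := by
          have h5 : (0:ℝ) ≤ 8 / N := by positivity
          nlinarith
  · -- i = 0, j ≠ 0
    subst hi
    have hzj : z j = -v j := by rw [hz, if_neg hj]; ring
    have e1 : |landauKernel z 0 j| ≤ |v j| / r ^ 2 := by
      unfold landauKernel
      rw [if_neg (fun h => hj h.symm), hzr]
      rw [abs_mul, abs_of_nonneg (by positivity : (0:ℝ) ≤ r⁻¹)]
      have h2 : |(0:ℝ) - z 0 * z j / r ^ 2| ≤ r * |v j| / r ^ 2 := by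
        have e : (0:ℝ) - z 0 * z j / r ^ 2 = -(z 0 * z j) / r ^ 2 := by ring
        rw [e, abs_div, abs_neg, abs_mul, hzj, abs_neg,
          abs_of_nonneg (show (0:ℝ) ≤ r ^ 2 by positivity)]
        gcongr <;> exact habs 0
      calc r⁻¹ * |(0:ℝ) - z 0 * z j / r ^ 2| ≤ r⁻¹ * (r * |v j| / r ^ 2) := by gcongr
        _ = |v j| / r ^ 2 := by field_simp
    rw [if_pos rfl, if_neg hj]
    have hvj : |v j| ≤ (1 + ‖v‖ ^ 2) / 2 := by
      have h1 : v j ^ 2 ≤ ‖v‖ ^ 2 := hvcoord j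
      nlinarith [sq_nonneg (|v j| - 1), sq_abs (v j)]
    have habsvj := abs_nonneg (v j)
    calc (N:ℝ) * 1 * |landauKernel z 0 j|
        ≤ (N:ℝ) * 1 * (|v j| / r ^ 2) := by gcongr
        _ ≤ (N:ℝ) * 1 * (|v j| / ((N:ℝ)/2) ^ 2) := by gcongr <;> positivity
        _ = 4 / N * |v j| := by field_simp; ring
        _ ≤ 4 / N * ((1 + ‖v‖ ^ 2) / 2) := by gcongr
        _ ≤ 8 / N * (1 + ‖v‖ ^ 2) := by
          rw [div_mul_eq_mul_div, div_mul_eq_mul_div, div_le_div_iff₀ hNpos hNpos]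
          nlinarith
  · -- i ≠ 0, j = 0
    subst hj
    have hzi : z i = -v i := by rw [hz, if_neg hi]; ring
    have e1 : |landauKernel z i 0| ≤ |v i| / r ^ 2 := by
      unfold landauKernel
      rw [if_neg hi, hzr]
      rw [abs_mul, abs_of_nonneg (by positivity : (0:ℝ) ≤ r⁻¹)]
      have h2 : |(0:ℝ) - z i * z 0 / r ^ 2| ≤ |v i| * r / r ^ 2 := by
        have e : (0:ℝ) - z i * z 0 / r ^ 2 = -(z i * z 0) / r ^ 2 := by ring
        rw [e, abs_div, abs_neg, abs_mul, hzi, abs_neg,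
          abs_of_nonneg (show (0:ℝ) ≤ r ^ 2 by positivity)]
        gcongr <;> exact habs 0
      calc r⁻¹ * |(0:ℝ) - z i * z 0 / r ^ 2| ≤ r⁻¹ * (|v i| * r / r ^ 2) := by gcongr
        _ = |v i| / r ^ 2 := by field_simp
    rw [if_neg hi, if_pos rfl]
    have hvj : |v i| ≤ (1 + ‖v‖ ^ 2) / 2 := by
      have h1 : v i ^ 2 ≤ ‖v‖ ^ 2 := hvcoord i
      nlinarith [sq_nonneg (|v i| - 1), sq_abs (v i)]
    have habsvi := abs_nonneg (v i)
    calc (1:ℝ) * N * |landauKernel z i 0|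
        ≤ (1:ℝ) * N * (|v i| / r ^ 2) := by gcongr
        _ ≤ (1:ℝ) * N * (|v i| / ((N:ℝ)/2) ^ 2) := by gcongr <;> positivity
        _ = 4 / N * |v i| := by field_simp; ring
        _ ≤ 4 / N * ((1 + ‖v‖ ^ 2) / 2) := by gcongr
        _ ≤ 8 / N * (1 + ‖v‖ ^ 2) := by
          rw [div_mul_eq_mul_div, div_mul_eq_mul_div, div_le_div_iff₀ hNpos hNpos]
          nlinarith
  · -- i ≠ 0, j ≠ 0
    have e1 : |landauKernel z i j| ≤ 2 / r := by
      unfold landauKernel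
      rw [hzr, abs_mul, abs_of_nonneg (by positivity : (0:ℝ) ≤ r⁻¹)]
      have h2 : |(if i = j then (1:ℝ) else 0) - z i * z j / r ^ 2| ≤ 2 := by
        have ha : |(if i = j then (1:ℝ) else 0)| ≤ 1 := by split_ifs <;> simp
        have hb : |z i * z j / r ^ 2| ≤ 1 := by
          rw [abs_div, abs_mul, abs_of_nonneg (by positivity : (0:ℝ) ≤ r^2),
            div_le_one (by positivity)]
          calc |z i| * |z j| ≤ r * r := mul_le_mul (habs i) (habs j) (abs_nonneg _) hrpos.le
            _ = r ^ 2 := (sq r).symm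
        calc |(if i = j then (1:ℝ) else 0) - z i * z j / r ^ 2|
            ≤ |(if i = j then (1:ℝ) else 0)| + |z i * z j / r ^ 2| := abs_sub _ _
          _ ≤ 2 := by linarith
      calc r⁻¹ * |(if i = j then (1:ℝ) else 0) - z i * z j / r ^ 2| ≤ r⁻¹ * 2 := by gcongr
        _ = 2 / r := by ring
    rw [if_neg hi, if_neg hj, one_mul, one_mul]
    calc |landauKernel z i j| ≤ 2 / r := e1
      _ ≤ 2 / ((N:ℝ)/2) := by gcongr
      _ = 4 / N := by field_simp <;> norm_num
      _ ≤ 8 / N * (1 + ‖v‖ ^ 2) := by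
        rw [div_mul_eq_mul_div, div_le_div_iff₀ hNpos hNpos]
        nlinarith

lemma entry_bound (N : ℕ) (hN : 2 ≤ N) (i j : Fin 3) :
    (if i = 0 then (N:ℝ) else 1) * (if j = 0 then (N:ℝ) else 1) *
      |∫ v in Metric.ball (0 : V) ((N : ℝ) / 2),
        landauKernel ((N : ℝ) • EuclideanSpace.single (0 : Fin 3) 1 - v) i j *
          stdGaussian v| ≤ 72 / N := by
  have hNr : (2:ℝ) ≤ (N:ℝ) := by exact_mod_cast hN
  have hNpos : (0:ℝ) < N := by linarith
  set D : ℝ := (if i = 0 then (N:ℝ) else 1) * (if j = 0 then (N:ℝ) else 1) with hDdef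
  have hDpos : 0 < D := by
    rw [hDdef]; split_ifs <;> positivity
  set c2 : ℝ := (2 * π) ^ (-(3 : ℝ) / 2) with hc2
  have hc2pos : 0 < c2 := by rw [hc2]; positivity
  set g : V → ℝ := fun v =>
    landauKernel ((N : ℝ) • EuclideanSpace.single (0 : Fin 3) 1 - v) i j * stdGaussian v
    with hg
  set h : V → ℝ := fun v => c2 * rexp (-‖v‖^2/4) with hh
  have hint : Integrable h := gauss_integrable.const_mul c2
  have hptw : ∀ v : V, v ∈ Metric.ball (0 : V) ((N : ℝ) / 2) → |D * g v| ≤ 24 / N * h v := by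
    intro v hv
    rw [Metric.mem_ball, dist_zero_right] at hv
    have hx : (0:ℝ) ≤ ‖v‖^2 := by positivity
    have hpb := pointwise_bound N hN i j v hv
    have hgauss : stdGaussian v = c2 * rexp (-‖v‖^2/2) := rfl
    have hgnn : (0:ℝ) ≤ stdGaussian v := by rw [hgauss]; positivity
    have hgv : |g v| = |landauKernel ((N : ℝ) • EuclideanSpace.single (0 : Fin 3) 1 - v) i j|
        * stdGaussian v := by
      rw [hg]
      simp only
      rw [abs_mul, abs_of_nonneg hgnn]
    calc |D * g v| = (D * |landauKernel ((N : ℝ) • EuclideanSpace.single (0 : Fin 3) 1 - v) i j|)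
          * stdGaussian v := by
          rw [abs_mul, abs_of_pos hDpos, hgv]; ring
      _ ≤ (8 / N * (1 + ‖v‖^2)) * stdGaussian v := mul_le_mul_of_nonneg_right hpb hgnn
      _ = 8 / N * c2 * ((1 + ‖v‖^2) * rexp (-‖v‖^2/2)) := by rw [hgauss]; ring
      _ ≤ 8 / N * c2 * (3 * rexp (-‖v‖^2/4)) := by
          refine mul_le_mul_of_nonneg_left (exp_aux hx) (by positivity)
      _ = 24 / N * h v := by rw [hh]; ring
  have step1 : |∫ v in Metric.ball (0 : V) ((N : ℝ) / 2), D * g v|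
      ≤ ∫ v in Metric.ball (0 : V) ((N : ℝ) / 2), 24 / N * h v := by
    calc |∫ v in Metric.ball (0 : V) ((N : ℝ) / 2), D * g v|
        ≤ ∫ v in Metric.ball (0 : V) ((N : ℝ) / 2), |D * g v| := by
          have hni := norm_integral_le_integral_norm
            (μ := volume.restrict (Metric.ball (0 : V) ((N : ℝ) / 2)))
            (f := fun v => D * g v)
          simp only [Real.norm_eq_abs] at hni
          exact hni
      _ ≤ ∫ v in Metric.ball (0 : V) ((N : ℝ) / 2), 24 / N * h v := by
          apply integral_mono_of_nonneg
          · exact Filter.Eventually.of_forall fun v => abs_nonneg _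
          · exact ((hint.const_mul _).restrict)
          · exact (MeasureTheory.ae_restrict_iff'
              Metric.isOpen_ball.measurableSet).mpr (Filter.Eventually.of_forall hptw)
  have step2 : ∫ v in Metric.ball (0 : V) ((N : ℝ) / 2), 24 / N * h v ≤ 72 / N := by
    have hnn : 0 ≤ᵐ[volume] h := Filter.Eventually.of_forall fun v => by
      rw [hh]; positivity
    have e1 : ∫ v in Metric.ball (0 : V) ((N : ℝ) / 2), 24 / N * h v
        = 24 / N * ∫ v in Metric.ball (0 : V) ((N : ℝ) / 2), h v := by
      exact integral_const_mul _ _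
    have e2 : ∫ v in Metric.ball (0 : V) ((N : ℝ) / 2), h v ≤ ∫ v : V, h v :=
      setIntegral_le_integral hint hnn
    have e3 : ∫ v : V, h v = c2 * (4*π)^((3:ℝ)/2) := by
      rw [hh, integral_const_mul, gauss_value]
    have e4 : ∫ v : V, h v ≤ 3 := by rw [e3, hc2]; exact gauss_K
    rw [e1]
    calc 24 / N * ∫ v in Metric.ball (0 : V) ((N : ℝ) / 2), h v
        ≤ 24 / N * 3 := by
          apply mul_le_mul_of_nonneg_left (le_trans e2 e4) (by positivity)
      _ = 72 / N := by ring
  have final : D * |∫ v in Metric.ball (0 : V) ((N : ℝ) / 2), g v| ≤ 72 / N := by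
    have : D * |∫ v in Metric.ball (0 : V) ((N : ℝ) / 2), g v|
        = |∫ v in Metric.ball (0 : V) ((N : ℝ) / 2), D * g v| := by
      rw [integral_const_mul, abs_mul, abs_of_pos hDpos]
    rw [this]; exact le_trans step1 step2
  calc (if i = 0 then (N:ℝ) else 1) * (if j = 0 then (N:ℝ) else 1) *
      |∫ v in Metric.ball (0 : V) ((N : ℝ) / 2), g v|
      = D * |∫ v in Metric.ball (0 : V) ((N : ℝ) / 2), g v| := by rw [hDdef]
    _ ≤ 72 / N := final


theorem stmt_17 :
    ∃ C : ℝ, 0 < C ∧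
      ∀ (N : ℕ), 2 ≤ N →
        ∀ ξ : Fin 3 → ℝ,
          (∑ i : Fin 3, ∑ j : Fin 3,
              ξ i * (if i = 0 then (N : ℝ) else 1) *
                (∫ v in Metric.ball (0 : V) ((N : ℝ) / 2),
                  landauKernel ((N : ℝ) • EuclideanSpace.single (0 : Fin 3) 1 - v) i j *
                    stdGaussian v) *
                (if j = 0 then (N : ℝ) else 1) * ξ j) ≤
            C / (N : ℝ) * ∑ i : Fin 3, ξ i ^ 2 := by
  refine ⟨216, by norm_num, ?_⟩
  intro N hN ξ
  have hNr : (2:ℝ) ≤ (N:ℝ) := by exact_mod_cast hN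
  have hNpos : (0:ℝ) < N := by linarith
  have key : ∀ i j : Fin 3,
      ξ i * (if i = 0 then (N : ℝ) else 1) *
        (∫ v in Metric.ball (0 : V) ((N : ℝ) / 2),
          landauKernel ((N : ℝ) • EuclideanSpace.single (0 : Fin 3) 1 - v) i j *
            stdGaussian v) *
        (if j = 0 then (N : ℝ) else 1) * ξ j ≤ 72 / N * (|ξ i| * |ξ j|) := by
    intro i j
    have hMij := entry_bound N hN i j
    have hDi : 0 < (if i = 0 then (N:ℝ) else 1) := by split_ifs; exacts [hNpos, one_pos]
    have hDj : 0 < (if j = 0 then (N:ℝ) else 1) := by split_ifs; exacts [hNpos, one_pos]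
    calc ξ i * (if i = 0 then (N : ℝ) else 1) *
        (∫ v in Metric.ball (0 : V) ((N : ℝ) / 2),
          landauKernel ((N : ℝ) • EuclideanSpace.single (0 : Fin 3) 1 - v) i j *
            stdGaussian v) *
        (if j = 0 then (N : ℝ) else 1) * ξ j
        ≤ |ξ i * (if i = 0 then (N : ℝ) else 1) *
            (∫ v in Metric.ball (0 : V) ((N : ℝ) / 2),
              landauKernel ((N : ℝ) • EuclideanSpace.single (0 : Fin 3) 1 - v) i j *
                stdGaussian v) *
            (if j = 0 then (N : ℝ) else 1) * ξ j| := le_abs_self _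
      _ = |ξ i| * |ξ j| * ((if i = 0 then (N : ℝ) else 1) * (if j = 0 then (N : ℝ) else 1) *
            |∫ v in Metric.ball (0 : V) ((N : ℝ) / 2),
              landauKernel ((N : ℝ) • EuclideanSpace.single (0 : Fin 3) 1 - v) i j *
                stdGaussian v|) := by
          rw [abs_mul, abs_mul, abs_mul, abs_mul, abs_of_pos hDi, abs_of_pos hDj]
          ring
      _ ≤ |ξ i| * |ξ j| * (72 / N) :=
          mul_le_mul_of_nonneg_left hMij (by positivity)
      _ = 72 / N * (|ξ i| * |ξ j|) := by ring
  calc (∑ i : Fin 3, ∑ j : Fin 3,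
        ξ i * (if i = 0 then (N : ℝ) else 1) *
          (∫ v in Metric.ball (0 : V) ((N : ℝ) / 2),
            landauKernel ((N : ℝ) • EuclideanSpace.single (0 : Fin 3) 1 - v) i j *
              stdGaussian v) *
          (if j = 0 then (N : ℝ) else 1) * ξ j)
      ≤ ∑ i : Fin 3, ∑ j : Fin 3, 72 / N * (|ξ i| * |ξ j|) :=
        Finset.sum_le_sum fun i _ => Finset.sum_le_sum fun j _ => key i j
    _ ≤ 216 / N * ∑ i : Fin 3, ξ i ^ 2 := by
        simp only [Fin.sum_univ_three]
        have hq : (|ξ 0| + |ξ 1| + |ξ 2|) ^ 2 ≤ 3 * (ξ 0 ^ 2 + ξ 1 ^ 2 + ξ 2 ^ 2) := by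
          nlinarith [sq_nonneg (|ξ 0| - |ξ 1|), sq_nonneg (|ξ 0| - |ξ 2|),
            sq_nonneg (|ξ 1| - |ξ 2|), sq_abs (ξ 0), sq_abs (ξ 1), sq_abs (ξ 2)]
        have h72 : (0:ℝ) ≤ 72 / N := by positivity
        have hmul := mul_le_mul_of_nonneg_left hq h72
        have hexp : 72 / (N:ℝ) * (|ξ 0| + |ξ 1| + |ξ 2|) ^ 2
            = 72 / N * (|ξ 0| * |ξ 0|) + 72 / N * (|ξ 0| * |ξ 1|) + 72 / N * (|ξ 0| * |ξ 2|) +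
              (72 / N * (|ξ 1| * |ξ 0|) + 72 / N * (|ξ 1| * |ξ 1|) + 72 / N * (|ξ 1| * |ξ 2|)) +
              (72 / N * (|ξ 2| * |ξ 0|) + 72 / N * (|ξ 2| * |ξ 1|) + 72 / N * (|ξ 2| * |ξ 2|)) := by
          ring
        have hfin : 72 / (N:ℝ) * (3 * (ξ 0 ^ 2 + ξ 1 ^ 2 + ξ 2 ^ 2))
            = 216 / N * (ξ 0 ^ 2 + ξ 1 ^ 2 + ξ 2 ^ 2) := by ring
        linarith [hmul, hexp, hfin]
end
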